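/- δₒ(R) is the ⊑↓-least outer deterministic multirelation above R: R ⊑↓ δₒ(R), and if S is outer deterministic with R ⊑↓ S then δₒ(R) ⊑↓ S. Dually, δᵢ(R) is the ⊑↓-greatest inner deterministic multirelation below R. -/
import Mathlib


universe u v w x

variable {X : Type u} {Y : Type v} {Z : Type w} {W : Type x}

/-- Relational composition. -/
def rcomp (R : Set (X × Y)) (S : Set (Y × Z)) : Set (X × Z) :=
  {p | ∃ b, (p.1, b) ∈ R ∧ (b, p.2) ∈ S}

/-- Power transpose Λ. -/
def Lam (R : Set (X × Y)) : Set (X × Set Y) :=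
  {p | p.2 = {b | (p.1, b) ∈ R}}

/-- α : postcomposition with the has-element relation. -/
def alphaM (S : Set (X × Set Y)) : Set (X × Y) :=
  {p | ∃ B, (p.1, B) ∈ S ∧ p.2 ∈ B}

/-- η : singleton embedding. -/
def etaM (R : Set (X × Y)) : Set (X × Set Y) :=
  {p | ∃ b, (p.1, b) ∈ R ∧ p.2 = {b}}

/-- Peleg composition. -/
def peleg (R : Set (X × Set Y)) (S : Set (Y × Set Z)) : Set (X × Set Z) :=
  {p | ∃ B, (p.1, B) ∈ R ∧ ∃ f : Y → Set Z, (∀ b ∈ B, (b, f b) ∈ S) ∧ p.2 = ⋃ b ∈ B, f b}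

/-- Outer deterministic: each element relates to exactly one set. -/
def OuterDet (R : Set (X × Set Y)) : Prop := ∀ a, ∃! B, (a, B) ∈ R

/-- Inner deterministic: every related set is a singleton. -/
def InnerDet (R : Set (X × Set Y)) : Prop := ∀ a B, (a, B) ∈ R → ∃ b, B = {b}

/-- Inner univalent: every related set is empty or a singleton. -/
def InnerUniv (R : Set (X × Set Y)) : Prop := ∀ a B, (a, B) ∈ R → B = ∅ ∨ ∃ b, B = {b}

/-- The unit 1_X. -/
def oneM (X : Type u) : Set (X × Set X) := {p | p.2 = {p.1}}

/-- Identity relation. -/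
def idR (X : Type u) : Set (X × X) := {p | p.1 = p.2}

/-- Hoare preorder ⊑↓. -/
def hle (R S : Set (X × Set Y)) : Prop := ∀ a A, (a, A) ∈ R → ∃ B, (a, B) ∈ S ∧ A ⊆ B

/-- Smyth preorder ⊑↑. -/
def sle (P Q : Set (X × Set Y)) : Prop := ∀ a B, (a, B) ∈ Q → ∃ A, (a, A) ∈ P ∧ A ⊆ B

/-- Down-closure. -/
def downCl (R : Set (X × Set Y)) : Set (X × Set Y) := {p | ∃ B, (p.1, B) ∈ R ∧ p.2 ⊆ B}

/-- Atoms: pairs whose second component is a singleton. -/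
def atomsM (X : Type u) (Y : Type v) : Set (X × Set Y) := {p | ∃ b, p.2 = {b}}

/-- Terminal part τ(R). -/
def tauM (R : Set (X × Set Y)) : Set (X × Set Y) := {p ∈ R | p.2 = ∅}

/-- Terminal part of R viewed as a multirelation into any other powerset. -/
def tauAs (R : Set (X × Set Y)) : Set (X × Set Z) := {p | (p.1, (∅ : Set Y)) ∈ R ∧ p.2 = ∅}

/-- Outer determinisation (fusion). -/
def deltaO (R : Set (X × Set Y)) : Set (X × Set Y) := Lam (alphaM R)

/-- Inner determinisation (fission). -/
def deltaI (R : Set (X × Set Y)) : Set (X × Set Y) := etaM (alphaM R)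

theorem stmt16 (R : Set (X × Set Y)) :
    (OuterDet (deltaO R) ∧ hle R (deltaO R) ∧
      ∀ S : Set (X × Set Y), OuterDet S → hle R S → hle (deltaO R) S) ∧
    (InnerDet (deltaI R) ∧ hle (deltaI R) R ∧
      ∀ S : Set (X × Set Y), InnerDet S → hle S R → hle S (deltaI R)) := by
  constructor
  · refine ⟨?_, ?_, ?_⟩
    · intro a
      exact ⟨{b | (a, b) ∈ alphaM R}, rfl, fun B hB => hB⟩
    · intro a A hA
      exact ⟨{b | (a, b) ∈ alphaM R}, rfl, fun b hb => ⟨A, hA, hb⟩⟩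
    · intro S hS hRS a A hA
      obtain ⟨B, hB, hu⟩ := hS a
      refine ⟨B, hB, ?_⟩
      intro b hb
      rw [show A = {b | (a, b) ∈ alphaM R} from hA] at hb
      obtain ⟨C, hC, hbC⟩ := hb
      obtain ⟨B', hB', hCB'⟩ := hRS a C hC
      exact (hu B' hB') ▸ hCB' hbC
  · refine ⟨?_, ?_, ?_⟩
    · intro a A hA
      obtain ⟨b, _, hb⟩ := hA
      exact ⟨b, hb⟩
    · intro a A hA
      obtain ⟨b, ⟨B, hB, hbB⟩, hb⟩ := hA
      have hA' : A = {b} := hb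
      subst hA'
      exact ⟨B, hB, Set.singleton_subset_iff.mpr hbB⟩
    · intro S hS hSR a A hA
      obtain ⟨b, hb⟩ := hS a A hA
      obtain ⟨B, hB, hAB⟩ := hSR a A hA
      have hA' : A = {b} := hb
      subst hA'
      exact ⟨{b}, ⟨b, ⟨B, hB, hAB rfl⟩, rfl⟩, subset_rfl⟩
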